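/- Let δ ∈ (0, 1/2). Assume that Σ \ ∂Σ is nonempty, that R(x, δ) > 0 for every x ∈ Σ \ ∂Σ, and that a_δ is finite. Then there exist a point y ∈ Σ \ ∂Σ and a number R₁ > 0 such that: (1) a_δ·R₁ < (1/2)·d_Σ(y, ∂Σ); (2) R(x, δ) > R₁ for every x ∈ B̄_Σ(y, a_δ·R₁); (3) the ball B̄_Σ(y, 5R₁) is not δ weakly chord arc. -/

import Mathlib

open Metric Set

/-- `Σ(x, r)`: the closure (in the intrinsic topology of `X`) of the connected component
containing `x` of the intersection of `Σ` with the open Euclidean ball `𝔹(ι x, r)`,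
where `ι : X → ℝ³` realizes the surface `Σ` as a subset of `ℝ³`. -/
noncomputable def sigmaComp {X : Type*} [TopologicalSpace X]
    (ι : X → EuclideanSpace ℝ (Fin 3)) (x : X) (r : ℝ) : Set X :=
  closure (connectedComponentIn (ι ⁻¹' Metric.ball (ι x) r) x)

/-- A set is homeomorphic to a closed 2-dimensional disk. -/
def IsDisk2 {X : Type*} [TopologicalSpace X] (A : Set X) : Prop :=
  Nonempty (↥A ≃ₜ ↥(Metric.closedBall (0 : EuclideanSpace ℝ (Fin 2)) 1))

/-- The intrinsic closed ball `B̄_Σ(x, R)` is `δ` weakly chord arc: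
(i) for all `s ∈ (0, R)`, `B̄_Σ(x, s) ⊆ Σ \ ∂Σ`, and
(ii) for all `s ∈ (0, R]`, `Σ(x, δ s)` is homeomorphic to a closed 2-disk and
`Σ(x, δ s) ⊆ B̄_Σ(x, s/2)`. -/
def WeaklyChordArc {X : Type*} [MetricSpace X]
    (ι : X → EuclideanSpace ℝ (Fin 3)) (bd : Set X) (δ : ℝ) (x : X) (R : ℝ) : Prop :=
  (∀ s ∈ Set.Ioo (0 : ℝ) R, Metric.closedBall x s ⊆ bdᶜ) ∧
  ∀ s ∈ Set.Ioc (0 : ℝ) R,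
    IsDisk2 (sigmaComp ι x (δ * s)) ∧ sigmaComp ι x (δ * s) ⊆ Metric.closedBall x (s / 2)

/-- `R(x, δ)`: the supremum of radii `R < d_Σ(x, ∂Σ)` such that `B̄_Σ(x, R)` is `δ` weakly
chord arc (equal to `0` if there is no such `R`, by the convention `sSup ∅ = 0` in `ℝ`). -/
noncomputable def chordArcRadius {X : Type*} [MetricSpace X]
    (ι : X → EuclideanSpace ℝ (Fin 3)) (bd : Set X) (x : X) (δ : ℝ) : ℝ :=
  sSup {R : ℝ | R < Metric.infDist x bd ∧ WeaklyChordArc ι bd δ x R}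

/-- The set of ratios `d_Σ(x, ∂Σ) / R(x, δ)` for `x ∈ Σ \ ∂Σ`; `a_δ` is its supremum. -/
noncomputable def ratioSet {X : Type*} [MetricSpace X]
    (ι : X → EuclideanSpace ℝ (Fin 3)) (bd : Set X) (δ : ℝ) : Set ℝ :=
  {r : ℝ | ∃ x ∉ bd, r = Metric.infDist x bd / chordArcRadius ι bd x δ}

/-- Lemma `cm3.39`-type: for `δ ∈ (0, 1/2)`, if `Σ \ ∂Σ ≠ ∅`, `R(x, δ) > 0`
on `Σ \ ∂Σ` and `a_δ` is finite, then there exist `y ∈ Σ \ ∂Σ` and `R₁ > 0` with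
(1) `a_δ R₁ < d_Σ(y, ∂Σ)/2`, (2) `R(x, δ) > R₁` for all `x ∈ B̄_Σ(y, a_δ R₁)`, and
(3) `B̄_Σ(y, 5R₁)` is not `δ` weakly chord arc. -/
theorem exists_smallest_non_chord_arc_scale
    {X : Type*} [MetricSpace X] [CompactSpace X] [ConnectedSpace X]
    (ι : X → EuclideanSpace ℝ (Fin 3)) (hι : Continuous ι) (hinj : Function.Injective ι)
    (bd : Set X) (hbd_closed : IsClosed bd) (hbd_ne : bd.Nonempty)
    (δ : ℝ) (hδ : δ ∈ Set.Ioo (0 : ℝ) (1 / 2))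
    (hne : ∃ x, x ∉ bd)
    (hRpos : ∀ x ∉ bd, 0 < chordArcRadius ι bd x δ)
    (hbdd : BddAbove (ratioSet ι bd δ)) :
    ∃ y ∉ bd, ∃ R₁ > (0 : ℝ),
      sSup (ratioSet ι bd δ) * R₁ < (1 / 2) * Metric.infDist y bd ∧
      (∀ x ∈ Metric.closedBall y (sSup (ratioSet ι bd δ) * R₁),
        chordArcRadius ι bd x δ > R₁) ∧
      ¬ WeaklyChordArc ι bd δ y (5 * R₁) := by
  set a := sSup (ratioSet ι bd δ) with ha
  obtain ⟨x₀, hx₀⟩ := hne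
  have hd0 : ∀ x ∉ bd, 0 < infDist x bd := fun x hx =>
    (hbd_closed.notMem_iff_infDist_pos hbd_ne).mp hx
  have hmem : ∀ x, x ∉ bd → infDist x bd / chordArcRadius ι bd x δ ∈ ratioSet ι bd δ :=
    fun x hx => ⟨x, hx, rfl⟩
  have hapos : 0 < a := by
    have h1 := le_csSup hbdd (hmem x₀ hx₀)
    have h2 := hd0 x₀ hx₀
    have h3 := hRpos x₀ hx₀
    have h4 : 0 < infDist x₀ bd / chordArcRadius ι bd x₀ δ := div_pos h2 h3
    linarith
  -- Property (2) follows from property (1) in general.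
  have key2 : ∀ y, y ∉ bd → ∀ R₁ : ℝ, a * R₁ < 1 / 2 * infDist y bd →
      ∀ x ∈ closedBall y (a * R₁), chordArcRadius ι bd x δ > R₁ := by
    intro y hy R₁ h1 x hx
    rw [mem_closedBall] at hx
    have hdy : 0 < infDist y bd := hd0 y hy
    have hdx : infDist y bd ≤ infDist x bd + dist y x := infDist_le_infDist_add_dist
    rw [dist_comm] at hdx
    have hdx' : infDist x bd > 1 / 2 * infDist y bd := by linarith
    have hxbd : x ∉ bd := by
      intro hxin
      rw [infDist_zero_of_mem hxin] at hdx'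
      linarith
    have hRx : 0 < chordArcRadius ι bd x δ := hRpos x hxbd
    have hratio : infDist x bd / chordArcRadius ι bd x δ ≤ a := le_csSup hbdd (hmem x hxbd)
    have hle : infDist x bd ≤ a * chordArcRadius ι bd x δ := by
      rw [div_le_iff₀ hRx] at hratio
      linarith [hratio]
    exact lt_of_mul_lt_mul_left (by linarith) hapos.le
  -- If `5 R₁ > d(y, bd)`, the ball is automatically not weakly chord arc.
  have routeB : ∀ y, y ∉ bd → ∀ R₁ : ℝ, infDist y bd < 5 * R₁ →
      ¬ WeaklyChordArc ι bd δ y (5 * R₁) := by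
    intro y hy R₁ hlt hW
    obtain ⟨z, hz, hdz⟩ := hbd_closed.isCompact.exists_infDist_eq_dist hbd_ne y
    have hdy : 0 < infDist y bd := hd0 y hy
    have hs : (infDist y bd + 5 * R₁) / 2 ∈ Set.Ioo (0 : ℝ) (5 * R₁) :=
      ⟨by linarith, by linarith⟩
    have hzmem : z ∈ closedBall y ((infDist y bd + 5 * R₁) / 2) := by
      rw [mem_closedBall, dist_comm, ← hdz]; linarith
    exact (hW.1 _ hs hzmem) hz
  rcases lt_or_ge a (5 / 2) with hA | hA
  · -- Case `a < 5/2`: take any `y` and `R₁` with `d(y)/5 < R₁ < d(y)/(2a)`.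
    set d := infDist x₀ bd with hd
    have hdpos : 0 < d := hd0 x₀ hx₀
    have hlt : d / 5 < d / (2 * a) :=
      div_lt_div_of_pos_left hdpos (by linarith) (by linarith)
    set R₁ := (d / 5 + d / (2 * a)) / 2 with hR₁
    have hR₁pos : 0 < R₁ := by
      have h5 : 0 < d / 5 := by positivity
      have h2a : 0 < d / (2 * a) := div_pos hdpos (by linarith)
      rw [hR₁]; linarith
    have hkey : a * R₁ < 1 / 2 * d := by
      have heq : a * (d / (2 * a)) = d / 2 := by field_simp
      have : a * R₁ < a * (d / (2 * a)) :=
        mul_lt_mul_of_pos_left (by rw [hR₁]; linarith) hapos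
      linarith [this, heq.le, heq.ge]
    refine ⟨x₀, hx₀, R₁, hR₁pos, hkey, key2 x₀ hx₀ R₁ hkey, routeB x₀ hx₀ R₁ ?_⟩
    rw [hR₁]; linarith
  · -- Case `a ≥ 5/2`: take `y` with ratio `> 2a/5` and `R₁` with `R(y)/5 < R₁ < d(y)/(2a)`.
    have h25 : 2 * a / 5 < a := by linarith
    obtain ⟨r, hr, hrlt⟩ := exists_lt_of_lt_csSup ⟨_, hmem x₀ hx₀⟩ h25
    obtain ⟨y, hy, rfl⟩ := hr
    set Ry := chordArcRadius ι bd y δ with hRy_def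
    have hRy : 0 < Ry := hRpos y hy
    have hdy : 0 < infDist y bd := hd0 y hy
    have hmul : 2 * a * Ry < infDist y bd * 5 :=
      (div_lt_div_iff₀ (by norm_num) hRy).mp hrlt
    have hL : Ry / 5 < infDist y bd / (2 * a) :=
      (div_lt_div_iff₀ (by norm_num) (by linarith)).mpr (by nlinarith)
    set R₁ := (Ry / 5 + infDist y bd / (2 * a)) / 2 with hR₁
    have hR₁pos : 0 < R₁ := by
      have h5 : 0 < Ry / 5 := by positivity
      have h2a : 0 < infDist y bd / (2 * a) := div_pos hdy (by linarith)
      rw [hR₁]; linarith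
    have hR₁lt : R₁ < infDist y bd / (2 * a) := by rw [hR₁]; linarith
    have hkey : a * R₁ < 1 / 2 * infDist y bd := by
      have heq : a * (infDist y bd / (2 * a)) = infDist y bd / 2 := by field_simp
      have := mul_lt_mul_of_pos_left hR₁lt hapos
      linarith [heq.le, heq.ge]
    have h5lt : 5 * R₁ < infDist y bd := by
      have h1 : 5 * R₁ < 5 * (infDist y bd / (2 * a)) := by linarith
      have h2 : 5 * (infDist y bd / (2 * a)) ≤ infDist y bd := by
        have heq2 : 2 * a * (infDist y bd / (2 * a)) = infDist y bd := by field_simp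
        have ht : 0 ≤ infDist y bd / (2 * a) := by positivity
        nlinarith [heq2, ht]
      linarith
    have h5gt : Ry < 5 * R₁ := by rw [hR₁]; linarith
    refine ⟨y, hy, R₁, hR₁pos, hkey, key2 y hy R₁ hkey, ?_⟩
    intro hW
    have hmem5 : 5 * R₁ ∈ {R : ℝ | R < infDist y bd ∧ WeaklyChordArc ι bd δ y R} :=
      ⟨h5lt, hW⟩
    have hbdd5 : BddAbove {R : ℝ | R < infDist y bd ∧ WeaklyChordArc ι bd δ y R} :=
      ⟨infDist y bd, fun t ht => ht.1.le⟩
    have : 5 * R₁ ≤ Ry := le_csSup hbdd5 hmem5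
    linarith
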